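/- With F_{i,m,u} = binom(m,u)·(-1)^u·m!/((m+i+u+1/2)_{m+1}) · (x+m+i+u)_{2m+2i+2u+1}·(y+m+i)_{m-u}·(y-i-u-1)_{m-u} and partial sums S_{i,m,l} = ∑_{u=l}^{m} F_{i,m,u}, the quantity M_{i,m,l} = −2S_{i+1,m,l} + (x²+y²−(i+m+1)²−i²)·S_{i,m,l} − ((2i−1)/(2m+2))·S_{i−1,m+1,l+1} equals binom(m,l)·(-1)^l·m!/((m+i+l+1/2)_{m+1}) · (y² + l(2m+2i+l+2) − i²) · (x+m+i+l)_{2m+2i+2l+1} · (y+m+i)_{m−l} · (y−i−l−1)_{m−l}, for all integers i ≥ 1, m ≥ 0, 0 ≤ l ≤ m+1. -/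

import Mathlib

/-- Falling factorial `(a)_k = a(a-1)⋯(a-k+1)`. -/
noncomputable def ff {R : Type*} [CommRing R] (a : R) (k : ℕ) : R :=
  ∏ j ∈ Finset.range k, (a - (j : R))

/-- Falling factorial with integer index, `(a)_{-k}` interpreted as `1/((a+1)⋯(a+k))`. -/
noncomputable def ffz (a : ℚ) (n : ℤ) : ℚ :=
  if 0 ≤ n then ∏ j ∈ Finset.range n.toNat, (a - (j : ℚ))
  else (∏ j ∈ Finset.range (-n).toNat, (a + (j : ℚ) + 1))⁻¹

/-- The summand `F_{i,m,u}` (evaluated at `(x,y)`). -/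
noncomputable def Fterm (i m u : ℕ) (x y : ℚ) : ℚ :=
  (m.choose u : ℚ) * (-1)^u * (m.factorial : ℚ) / ff ((m:ℚ) + i + u + 1/2) (m+1)
    * ff (x + m + i + u) (2*m+2*i+2*u+1) * ff (y + m + i) (m-u) * ff (y - i - u - 1) (m-u)

/-- The partial sum `S_{i,m,l} = ∑_{u=l}^{m} F_{i,m,u}`. -/
noncomputable def S (i m l : ℕ) (x y : ℚ) : ℚ := ∑ u ∈ Finset.Icc l m, Fterm i m u x y

noncomputable def Rterm (i m l : ℕ) (x y : ℚ) : ℚ :=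
  (m.choose l : ℚ) * (-1)^l * (m.factorial : ℚ) / ff ((m:ℚ) + i + l + 1/2) (m+1)
    * (y^2 + (l:ℚ) * (2*(m:ℚ) + 2*i + l + 2) - (i:ℚ)^2)
    * ff (x + m + i + l) (2*m+2*i+2*l+1) * ff (y + m + i) (m-l) * ff (y - i - l - 1) (m-l)

lemma ffc {a b : ℚ} (k : ℕ) (h : a = b) : ff a k = ff b k := by rw [h]
lemma ff_zero (a : ℚ) : ff a 0 = 1 := by simp [ff]
lemma ff_succ (a : ℚ) (k : ℕ) : ff a (k+1) = ff a k * (a - k) := by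
  simp [ff, Finset.prod_range_succ]
lemma ff_succ_left (a : ℚ) (k : ℕ) : ff a (k+1) = a * ff (a-1) k := by
  unfold ff
  rw [Finset.prod_range_succ']
  rw [Finset.prod_congr rfl (fun j _ => show a - ((j+1 : ℕ):ℚ) = (a-1) - j by push_cast; ring)]
  simp [mul_comm]
lemma ff_shift (a : ℚ) (k : ℕ) : ff (a+1) (k+1) = (a+1) * ff a k := by
  rw [ff_succ_left, ffc _ (show a + 1 - 1 = a by ring)]
lemma ff_add_two (a : ℚ) (N : ℕ) : ff (a+1) (N+2) = (a+1) * (a - N) * ff a N := by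
  rw [ff_shift, ff_succ]; ring
lemma half_ne (z : ℤ) : (z:ℚ) + 1/2 ≠ 0 := by
  intro h
  have h2 : ((2*z+1 : ℤ) : ℚ) = 0 := by push_cast; linarith
  have := Int.cast_injective (α := ℚ) (h2.trans (Int.cast_zero).symm)
  omega
lemma ffE_ne (n k : ℕ) : ff ((n:ℚ) + 1/2) k ≠ 0 := by
  unfold ff
  apply Finset.prod_ne_zero_iff.mpr
  intro j _
  have : (n:ℚ) + 1/2 - j = ((n:ℤ) - j : ℤ) + 1/2 := by push_cast; ring
  rw [this]
  exact half_ne _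

lemma key_aux (ci cm cl x y E : ℚ) (hE : E ≠ 0) (hz1 : cm+ci+cl+3/2 ≠ 0)
    (hz2 : ci+cl+1/2 ≠ 0) (hz3 : 2*cm+2 ≠ 0) (hz4 : cl+1 ≠ 0) :
    (-2)*((x+cm+ci+cl+1)*(x-cm-ci-cl-1))*((y+cm+ci+1)*(y-ci-cm-1))/((cm+ci+cl+3/2)*E)
      + (x^2+y^2-(ci+cm+1)^2-ci^2)*((y+ci+cl+1)*(y-ci-cl-1))/(E*(ci+cl+1/2))
      + (2*ci-1)*((cm+1)*(cm+1))/(2*cm+2)/(cl+1)*((x+cm+ci+cl+1)*(x-cm-ci-cl-1))*((y+ci+cl+1)*(y-ci-cl-1))/((cm+ci+cl+3/2)*(E*(ci+cl+1/2)))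
      = (y^2+cl*(2*cm+2*ci+cl+2)-ci^2)*((y+ci+cl+1)*(y-ci-cl-1))/(E*(ci+cl+1/2))
      + ((cm-cl)/(cl+1))*(y^2+(cl+1)*(2*cm+2*ci+(cl+1)+2)-ci^2)*((x+cm+ci+cl+1)*(x-cm-ci-cl-1))/((cm+ci+cl+3/2)*E) := by
  set D : ℚ := ((cm+ci+cl+3/2)*E)*((ci+cl+1/2)*((2*cm+2)*(cl+1))) with hD
  have hDne : D ≠ 0 := by
    rw [hD]; exact mul_ne_zero (mul_ne_zero hz1 hE) (mul_ne_zero hz2 (mul_ne_zero hz3 hz4))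
  have e1 : (-2)*((x+cm+ci+cl+1)*(x-cm-ci-cl-1))*((y+cm+ci+1)*(y-ci-cm-1))/((cm+ci+cl+3/2)*E)
      = ((-2)*((x+cm+ci+cl+1)*(x-cm-ci-cl-1))*((y+cm+ci+1)*(y-ci-cm-1))*((ci+cl+1/2)*((2*cm+2)*(cl+1))))/D := by
    rw [div_eq_div_iff (mul_ne_zero hz1 hE) hDne, hD]; ring
  have e2 : (x^2+y^2-(ci+cm+1)^2-ci^2)*((y+ci+cl+1)*(y-ci-cl-1))/(E*(ci+cl+1/2))
      = ((x^2+y^2-(ci+cm+1)^2-ci^2)*((y+ci+cl+1)*(y-ci-cl-1))*((cm+ci+cl+3/2)*((2*cm+2)*(cl+1))))/D := by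
    rw [div_eq_div_iff (mul_ne_zero hE hz2) hDne, hD]; ring
  have e3 : (2*ci-1)*((cm+1)*(cm+1))/(2*cm+2)/(cl+1)*((x+cm+ci+cl+1)*(x-cm-ci-cl-1))*((y+ci+cl+1)*(y-ci-cl-1))/((cm+ci+cl+3/2)*(E*(ci+cl+1/2)))
      = ((2*ci-1)*((cm+1)*(cm+1))*((x+cm+ci+cl+1)*(x-cm-ci-cl-1))*((y+ci+cl+1)*(y-ci-cl-1)))/D := by
    rw [div_div, div_mul_eq_mul_div, div_mul_eq_mul_div, div_div,
      div_eq_div_iff (by exact mul_ne_zero (mul_ne_zero hz3 hz4) (mul_ne_zero hz1 (mul_ne_zero hE hz2))) hDne, hD]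
    ring
  have e4 : (y^2+cl*(2*cm+2*ci+cl+2)-ci^2)*((y+ci+cl+1)*(y-ci-cl-1))/(E*(ci+cl+1/2))
      = ((y^2+cl*(2*cm+2*ci+cl+2)-ci^2)*((y+ci+cl+1)*(y-ci-cl-1))*((cm+ci+cl+3/2)*((2*cm+2)*(cl+1))))/D := by
    rw [div_eq_div_iff (mul_ne_zero hE hz2) hDne, hD]; ring
  have e5 : ((cm-cl)/(cl+1))*(y^2+(cl+1)*(2*cm+2*ci+(cl+1)+2)-ci^2)*((x+cm+ci+cl+1)*(x-cm-ci-cl-1))/((cm+ci+cl+3/2)*E)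
      = ((cm-cl)*(y^2+(cl+1)*(2*cm+2*ci+(cl+1)+2)-ci^2)*((x+cm+ci+cl+1)*(x-cm-ci-cl-1))*((ci+cl+1/2)*(2*cm+2)))/D := by
    rw [div_mul_eq_mul_div, div_mul_eq_mul_div, div_div,
      div_eq_div_iff (mul_ne_zero hz4 (mul_ne_zero hz1 hE)) hDne, hD]
    ring
  rw [e1, e2, e3, e4, e5, ← add_div, ← add_div, ← add_div]
  congr 1
  ring

lemma key_aux2 (ci cm x y E : ℚ) (hE : E ≠ 0) (hz1 : cm+ci+cm+3/2 ≠ 0)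
    (hz2 : ci+cm+1/2 ≠ 0) (hz3 : 2*cm+2 ≠ 0) :
    (-2)*((x+cm+ci+cm+1)*(x-cm-ci-cm-1))/((cm+ci+cm+3/2)*E)
      + (x^2+y^2-(ci+cm+1)^2-ci^2)/(E*(ci+cm+1/2))
      + (2*ci-1)/(2*cm+2)*(cm+1)*((x+cm+ci+cm+1)*(x-cm-ci-cm-1))/((cm+ci+cm+3/2)*(E*(ci+cm+1/2)))
      = (y^2+cm*(2*cm+2*ci+cm+2)-ci^2)/(E*(ci+cm+1/2)) := by
  set D : ℚ := ((cm+ci+cm+3/2)*E)*((ci+cm+1/2)*(2*cm+2)) with hD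
  have hDne : D ≠ 0 := by
    rw [hD]; exact mul_ne_zero (mul_ne_zero hz1 hE) (mul_ne_zero hz2 hz3)
  have e1 : (-2)*((x+cm+ci+cm+1)*(x-cm-ci-cm-1))/((cm+ci+cm+3/2)*E)
      = ((-2)*((x+cm+ci+cm+1)*(x-cm-ci-cm-1))*((ci+cm+1/2)*(2*cm+2)))/D := by
    rw [div_eq_div_iff (mul_ne_zero hz1 hE) hDne, hD]; ring
  have e2 : (x^2+y^2-(ci+cm+1)^2-ci^2)/(E*(ci+cm+1/2))
      = ((x^2+y^2-(ci+cm+1)^2-ci^2)*((cm+ci+cm+3/2)*(2*cm+2)))/D := by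
    rw [div_eq_div_iff (mul_ne_zero hE hz2) hDne, hD]; ring
  have e3 : (2*ci-1)/(2*cm+2)*(cm+1)*((x+cm+ci+cm+1)*(x-cm-ci-cm-1))/((cm+ci+cm+3/2)*(E*(ci+cm+1/2)))
      = ((2*ci-1)*(cm+1)*((x+cm+ci+cm+1)*(x-cm-ci-cm-1)))/D := by
    rw [div_mul_eq_mul_div, div_mul_eq_mul_div, div_div,
      div_eq_div_iff (mul_ne_zero hz3 (mul_ne_zero hz1 (mul_ne_zero hE hz2))) hDne, hD]
    ring
  have e4 : (y^2+cm*(2*cm+2*ci+cm+2)-ci^2)/(E*(ci+cm+1/2))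
      = ((y^2+cm*(2*cm+2*ci+cm+2)-ci^2)*((cm+ci+cm+3/2)*(2*cm+2)))/D := by
    rw [div_eq_div_iff (mul_ne_zero hE hz2) hDne, hD]; ring
  rw [e1, e2, e3, e4, ← add_div, ← add_div]
  congr 1
  ring

set_option maxRecDepth 8000 in
set_option maxHeartbeats 1000000 in
lemma step_lt (i m l : ℕ) (hi : 1 ≤ i) (hl : l < m) (x y : ℚ) :
    -2 * Fterm (i+1) m l x y
      + (x^2 + y^2 - ((i:ℚ) + m + 1)^2 - (i:ℚ)^2) * Fterm i m l x y
      - (2*(i:ℚ) - 1) / (2*(m:ℚ) + 2) * Fterm (i-1) (m+1) (l+1) x y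
    = Rterm i m l x y - Rterm i m (l+1) x y := by
  unfold Fterm Rterm
  have hi' : ((i-1 : ℕ) : ℚ) = (i:ℚ) - 1 := by
    have := Nat.cast_sub (R := ℚ) hi; push_cast at this ⊢; linarith
  push_cast [hi']
  rw [show 2*m+2*(i+1)+2*l+1 = (2*m+2*i+2*l+1)+2 by omega]
  rw [show 2*(m+1)+2*(i-1)+2*(l+1)+1 = (2*m+2*i+2*l+1)+2 by omega]
  rw [show 2*m+2*i+2*(l+1)+1 = (2*m+2*i+2*l+1)+2 by omega]
  rw [show m-l = (m-l-1)+1 by omega]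
  rw [show m-(l+1) = m-l-1 by omega]
  have hml : ((m-l-1 : ℕ) : ℚ) = (m:ℚ) - l - 1 := by
    rw [show m-l-1 = m-(l+1) by omega, Nat.cast_sub (by omega)]; push_cast; ring
  have hN : ((2*m+2*i+2*l+1 : ℕ) : ℚ) = 2*(m:ℚ)+2*i+2*l+1 := by push_cast; ring
  have h1 : ff ((m:ℚ) + (↑i+1) + ↑l + 1/2) (m+1) = ((m:ℚ)+↑i+↑l+3/2) * ff ((m:ℚ)+↑i+↑l+1/2) m := by
    rw [ffc _ (show (m:ℚ) + (↑i+1) + ↑l + 1/2 = ((m:ℚ)+↑i+↑l+1/2)+1 by ring), ff_shift]; ring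
  have h5 : ff ((m:ℚ) + ↑i + ↑l + 1/2) (m+1) = ff ((m:ℚ)+↑i+↑l+1/2) m * ((i:ℚ)+↑l+1/2) := by
    rw [ff_succ]; push_cast; ring
  have h8 : ff ((m:ℚ) + 1 + (↑i-1) + (↑l+1) + 1/2) (m+1+1)
      = ((m:ℚ)+↑i+↑l+3/2) * (ff ((m:ℚ)+↑i+↑l+1/2) m * ((i:ℚ)+↑l+1/2)) := by
    rw [ffc _ (show (m:ℚ) + 1 + (↑i-1) + (↑l+1) + 1/2 = ((m:ℚ)+↑i+↑l+1/2)+1 by ring), ff_shift, h5]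
    ring
  have h12 : ff ((m:ℚ) + ↑i + (↑l+1) + 1/2) (m+1) = ((m:ℚ)+↑i+↑l+3/2) * ff ((m:ℚ)+↑i+↑l+1/2) m := by
    rw [ffc _ (show (m:ℚ) + ↑i + (↑l+1) + 1/2 = ((m:ℚ)+↑i+↑l+1/2)+1 by ring), ff_shift]; ring
  have h2 : ff (x + ↑m + (↑i+1) + ↑l) ((2*m+2*i+2*l+1)+2)
      = (x+↑m+↑i+↑l+1) * (x-↑m-↑i-↑l-1) * ff (x+↑m+↑i+↑l) (2*m+2*i+2*l+1) := by
    rw [ffc _ (show x + ↑m + (↑i+1) + ↑l = (x+↑m+↑i+↑l)+1 by ring), ff_add_two, hN]; ring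
  have h9 : ff (x + (↑m+1) + (↑i-1) + (↑l+1)) ((2*m+2*i+2*l+1)+2)
      = (x+↑m+↑i+↑l+1) * (x-↑m-↑i-↑l-1) * ff (x+↑m+↑i+↑l) (2*m+2*i+2*l+1) := by
    rw [ffc _ (show x + (↑m+1) + (↑i-1) + (↑l+1) = (x+↑m+↑i+↑l)+1 by ring), ff_add_two, hN]; ring
  have h13 : ff (x + ↑m + ↑i + (↑l+1)) ((2*m+2*i+2*l+1)+2)
      = (x+↑m+↑i+↑l+1) * (x-↑m-↑i-↑l-1) * ff (x+↑m+↑i+↑l) (2*m+2*i+2*l+1) := by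
    rw [ffc _ (show x + ↑m + ↑i + (↑l+1) = (x+↑m+↑i+↑l)+1 by ring), ff_add_two, hN]; ring
  have h3 : ff (y + ↑m + (↑i+1)) ((m-l-1)+1) = (y+↑m+↑i+1) * ff (y+↑m+↑i) (m-l-1) := by
    rw [ffc _ (show y + ↑m + (↑i+1) = (y+↑m+↑i)+1 by ring), ff_shift]
  have h4 : ff (y - (↑i+1) - ↑l - 1) ((m-l-1)+1) = ff (y-↑i-↑l-2) (m-l-1) * (y-↑i-↑m-1) := by
    rw [ffc _ (show y - (↑i+1) - ↑l - 1 = y-↑i-↑l-2 by ring), ff_succ, hml]; ring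
  have h6 : ff (y + ↑m + ↑i) ((m-l-1)+1) = ff (y+↑m+↑i) (m-l-1) * (y+↑i+↑l+1) := by
    rw [ff_succ, hml]; ring
  have h7 : ff (y - ↑i - ↑l - 1) ((m-l-1)+1) = (y-↑i-↑l-1) * ff (y-↑i-↑l-2) (m-l-1) := by
    rw [ffc _ (show y - ↑i - ↑l - 1 = (y-↑i-↑l-2)+1 by ring), ff_shift]; ring
  have h10 : ff (y + (↑m+1) + (↑i-1)) ((m-l-1)+1) = ff (y+↑m+↑i) (m-l-1) * (y+↑i+↑l+1) := by
    rw [ffc _ (show y + (↑m+1) + (↑i-1) = y+↑m+↑i by ring), h6]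
  have h11 : ff (y - (↑i-1) - (↑l+1) - 1) ((m-l-1)+1) = (y-↑i-↑l-1) * ff (y-↑i-↑l-2) (m-l-1) := by
    rw [ffc _ (show y - (↑i-1) - (↑l+1) - 1 = y-↑i-↑l-1 by ring), h7]
  have h14 : ff (y - ↑i - (↑l+1) - 1) (m-l-1) = ff (y-↑i-↑l-2) (m-l-1) := by
    rw [ffc _ (show y - ↑i - (↑l+1) - 1 = y-↑i-↑l-2 by ring)]
  rw [h1, h2, h3, h4, h5, h6, h7, h8, h9, h10, h11, h12, h13, h14]
  have hch1 : (((m+1).choose (l+1) : ℕ) : ℚ) = ((m:ℚ)+1) * (m.choose l) / ((l:ℚ)+1) := by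
    rw [eq_div_iff (by positivity)]
    exact_mod_cast congrArg (Nat.cast (R := ℚ)) (Nat.add_one_mul_choose_eq m l).symm
  have hch2 : ((m.choose (l+1) : ℕ) : ℚ) = ((m:ℚ)-↑l) * (m.choose l) / ((l:ℚ)+1) := by
    rw [eq_div_iff (by positivity)]
    have := congrArg (Nat.cast (R := ℚ)) (Nat.choose_succ_right_eq m l)
    push_cast [Nat.cast_sub (le_of_lt hl)] at this
    linarith [this]
  have hfac : (((m+1).factorial : ℕ) : ℚ) = ((m:ℚ)+1) * m.factorial := by
    rw [Nat.factorial_succ]; push_cast; ring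
  rw [hch1, hch2, hfac, pow_succ]
  have hE0 : ff ((m:ℚ)+↑i+↑l+1/2) m ≠ 0 := by
    have h := ffE_ne (m+i+l) m
    rwa [show ((m+i+l : ℕ):ℚ) + 1/2 = (m:ℚ)+↑i+↑l+1/2 by push_cast; ring] at h
  have hz1 : ((m:ℚ)+↑i+↑l+3/2) ≠ 0 := by positivity
  have hz2 : ((i:ℚ)+↑l+1/2) ≠ 0 := by positivity
  have hz3 : (2*(m:ℚ)+2) ≠ 0 := by positivity
  have hz4 : ((l:ℚ)+1) ≠ 0 := by positivity
  linear_combination ((m.choose l : ℚ) * (-1)^l * (m.factorial : ℚ)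
    * ff (x+(m:ℚ)+↑i+↑l) (2*m+2*i+2*l+1) * ff (y+(m:ℚ)+↑i) (m-l-1) * ff (y-(i:ℚ)-↑l-2) (m-l-1)) *
    key_aux (i:ℚ) (m:ℚ) (l:ℚ) x y (ff ((m:ℚ)+↑i+↑l+1/2) m) hE0 hz1 hz2 hz3 hz4

set_option maxRecDepth 8000 in
set_option maxHeartbeats 1000000 in
lemma step_eq (i m : ℕ) (hi : 1 ≤ i) (x y : ℚ) :
    -2 * Fterm (i+1) m m x y
      + (x^2 + y^2 - ((i:ℚ) + m + 1)^2 - (i:ℚ)^2) * Fterm i m m x y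
      - (2*(i:ℚ) - 1) / (2*(m:ℚ) + 2) * Fterm (i-1) (m+1) (m+1) x y
    = Rterm i m m x y - Rterm i m (m+1) x y := by
  unfold Fterm Rterm
  have hi' : ((i-1 : ℕ) : ℚ) = (i:ℚ) - 1 := by
    have := Nat.cast_sub (R := ℚ) hi; push_cast at this ⊢; linarith
  push_cast [hi']
  rw [show m.choose m = 1 from Nat.choose_self m]
  rw [show (m+1).choose (m+1) = 1 from Nat.choose_self (m+1)]
  rw [show m.choose (m+1) = 0 from Nat.choose_eq_zero_of_lt (by omega)]
  rw [show 2*m+2*(i+1)+2*m+1 = (2*m+2*i+2*m+1)+2 by omega]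
  rw [show 2*(m+1)+2*(i-1)+2*(m+1)+1 = (2*m+2*i+2*m+1)+2 by omega]
  rw [show m-m = 0 by omega]
  rw [show m-(m+1) = 0 by omega]
  have hN : ((2*m+2*i+2*m+1 : ℕ) : ℚ) = 2*(m:ℚ)+2*i+2*m+1 := by push_cast; ring
  have h1 : ff ((m:ℚ) + (↑i+1) + ↑m + 1/2) (m+1) = ((m:ℚ)+↑i+↑m+3/2) * ff ((m:ℚ)+↑i+↑m+1/2) m := by
    rw [ffc _ (show (m:ℚ) + (↑i+1) + ↑m + 1/2 = ((m:ℚ)+↑i+↑m+1/2)+1 by ring), ff_shift]; ring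
  have h5 : ff ((m:ℚ) + ↑i + ↑m + 1/2) (m+1) = ff ((m:ℚ)+↑i+↑m+1/2) m * ((i:ℚ)+↑m+1/2) := by
    rw [ff_succ]; push_cast; ring
  have h8 : ff ((m:ℚ) + 1 + (↑i-1) + (↑m+1) + 1/2) (m+1+1)
      = ((m:ℚ)+↑i+↑m+3/2) * (ff ((m:ℚ)+↑i+↑m+1/2) m * ((i:ℚ)+↑m+1/2)) := by
    rw [ffc _ (show (m:ℚ) + 1 + (↑i-1) + (↑m+1) + 1/2 = ((m:ℚ)+↑i+↑m+1/2)+1 by ring), ff_shift, h5]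
    ring
  have h2 : ff (x + ↑m + (↑i+1) + ↑m) ((2*m+2*i+2*m+1)+2)
      = (x+↑m+↑i+↑m+1) * (x-↑m-↑i-↑m-1) * ff (x+↑m+↑i+↑m) (2*m+2*i+2*m+1) := by
    rw [ffc _ (show x + ↑m + (↑i+1) + ↑m = (x+↑m+↑i+↑m)+1 by ring), ff_add_two, hN]; ring
  have h9 : ff (x + (↑m+1) + (↑i-1) + (↑m+1)) ((2*m+2*i+2*m+1)+2)
      = (x+↑m+↑i+↑m+1) * (x-↑m-↑i-↑m-1) * ff (x+↑m+↑i+↑m) (2*m+2*i+2*m+1) := by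
    rw [ffc _ (show x + (↑m+1) + (↑i-1) + (↑m+1) = (x+↑m+↑i+↑m)+1 by ring), ff_add_two, hN]; ring
  rw [h1, h2, h5, h8, h9, pow_succ]
  simp only [ff_zero]
  have hfac : (((m+1).factorial : ℕ) : ℚ) = ((m:ℚ)+1) * m.factorial := by
    rw [Nat.factorial_succ]; push_cast; ring
  rw [hfac]
  have hE0 : ff ((m:ℚ)+↑i+↑m+1/2) m ≠ 0 := by
    have h := ffE_ne (m+i+m) m
    rwa [show ((m+i+m : ℕ):ℚ) + 1/2 = (m:ℚ)+↑i+↑m+1/2 by push_cast; ring] at h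
  have hz1 : ((m:ℚ)+↑i+↑m+3/2) ≠ 0 := by positivity
  have hz2 : ((i:ℚ)+↑m+1/2) ≠ 0 := by positivity
  have hz3 : (2*(m:ℚ)+2) ≠ 0 := by positivity
  linear_combination ((-1:ℚ)^m * (m.factorial : ℚ) * ff (x+(m:ℚ)+↑i+↑m) (2*m+2*i+2*m+1)) *
    key_aux2 (i:ℚ) (m:ℚ) x y (ff ((m:ℚ)+↑i+↑m+1/2) m) hE0 hz1 hz2 hz3

lemma step (i m l : ℕ) (hi : 1 ≤ i) (hl : l ≤ m) (x y : ℚ) :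
    -2 * Fterm (i+1) m l x y
      + (x^2 + y^2 - ((i:ℚ) + m + 1)^2 - (i:ℚ)^2) * Fterm i m l x y
      - (2*(i:ℚ) - 1) / (2*(m:ℚ) + 2) * Fterm (i-1) (m+1) (l+1) x y
    = Rterm i m l x y - Rterm i m (l+1) x y := by
  rcases lt_or_eq_of_le hl with h | h
  · exact step_lt i m l hi h x y
  · subst h; exact step_eq i l hi x y

lemma S_split (j m l : ℕ) (h : l ≤ m) (x y : ℚ) :
    S j m l x y = Fterm j m l x y + S j m (l+1) x y := by
  unfold S
  rw [show Finset.Icc l m = insert l (Finset.Icc (l+1) m) by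
    rw [Finset.Icc_add_one_left_eq_Ioc, Finset.Ioc_insert_left h]]
  rw [Finset.sum_insert (by simp)]

lemma Rterm_top (i m : ℕ) (x y : ℚ) : Rterm i m (m+1) x y = 0 := by
  unfold Rterm
  rw [Nat.choose_eq_zero_of_lt (by omega)]
  simp

lemma aux (i m : ℕ) (hi : 1 ≤ i) (x y : ℚ) : ∀ n l, l + n = m + 1 →
    -2 * S (i+1) m l x y + (x^2 + y^2 - ((i:ℚ) + m + 1)^2 - (i:ℚ)^2) * S i m l x y
        - (2*(i:ℚ) - 1) / (2*(m:ℚ) + 2) * S (i-1) (m+1) (l+1) x y = Rterm i m l x y := by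
  intro n
  induction n with
  | zero =>
    intro l hl
    have h1 : l = m + 1 := by omega
    subst h1
    rw [Rterm_top]
    unfold S
    rw [Finset.Icc_eq_empty (by omega), Finset.Icc_eq_empty (by omega)]
    simp
  | succ n ih =>
    intro l hl
    have hlm : l ≤ m := by omega
    rw [S_split (i+1) m l hlm, S_split i m l hlm, S_split (i-1) (m+1) (l+1) (by omega)]
    have h2 := ih (l+1) (by omega)
    have h3 := step i m l hi hlm x y
    linear_combination h2 + h3

lemma ffz_of_le (a : ℚ) {m l : ℕ} (h : l ≤ m) : ffz a ((m:ℤ) - l) = ff a (m-l) := by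
  unfold ffz ff
  rw [if_pos (by omega), show ((m:ℤ) - l).toNat = m - l by omega]

theorem stmt4 (i m l : ℕ) (hi : 1 ≤ i) (hl : l ≤ m + 1) (x y : ℚ) :
    -2 * S (i+1) m l x y + (x^2 + y^2 - ((i:ℚ) + m + 1)^2 - (i:ℚ)^2) * S i m l x y
        - (2*(i:ℚ) - 1) / (2*(m:ℚ) + 2) * S (i-1) (m+1) (l+1) x y =
      (m.choose l : ℚ) * (-1)^l * (m.factorial : ℚ) / ff ((m:ℚ) + i + l + 1/2) (m+1)
        * (y^2 + (l:ℚ) * (2*(m:ℚ) + 2*i + l + 2) - (i:ℚ)^2)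
        * ff (x + m + i + l) (2*m+2*i+2*l+1)
        * ffz (y + m + i) ((m:ℤ) - l) * ffz (y - i - l - 1) ((m:ℤ) - l) := by
  have h := aux i m hi x y (m+1-l) l (by omega)
  rcases Nat.lt_or_ge l (m+1) with hc | hc
  · rw [ffz_of_le _ (by omega : l ≤ m), ffz_of_le _ (by omega : l ≤ m)]
    rw [h]
    unfold Rterm
    ring
  · have h1 : l = m + 1 := by omega
    subst h1
    rw [h, Rterm_top]
    rw [Nat.choose_eq_zero_of_lt (by omega)]
    simp
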